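/- For every integer k ≥ 2, the k-color Gallai-Ramsey number of the triangle satisfies gr_k(K_3 : K_3) = 5^{k/2} + 1 if k is even, and gr_k(K_3 : K_3) = 2·5^{(k−1)/2} + 1 if k is odd. -/

import Mathlib

open SimpleGraph

/-- The edge coloring `c` of the complete graph on `V` contains a rainbow triangle. -/
def HasRainbowTriangle {V α : Type*} (c : Sym2 V → α) : Prop :=
  ∃ x y z : V, x ≠ y ∧ x ≠ z ∧ y ≠ z ∧
    c s(x, y) ≠ c s(x, z) ∧ c s(x, y) ≠ c s(y, z) ∧ c s(x, z) ≠ c s(y, z)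

/-- The edge coloring `c` contains a copy of `H` all of whose edges have color `i`. -/
def HasMonoCopyIn {V W α : Type*} (c : Sym2 V → α) (H : SimpleGraph W) (i : α) : Prop :=
  ∃ f : W ↪ V, ∀ u v, H.Adj u v → c s(f u, f v) = i

/-- The edge coloring `c` contains a monochromatic copy of `H`. -/
def HasMonoCopy {V W α : Type*} (c : Sym2 V → α) (H : SimpleGraph W) : Prop :=
  ∃ i, HasMonoCopyIn c H i

/-- Every `k`-coloring of the edges of `K_n` contains a rainbow triangle or a
monochromatic copy of `H`. -/
def grProp {W : Type*} (k : ℕ) (H : SimpleGraph W) (n : ℕ) : Prop :=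
  ∀ c : Sym2 (Fin n) → Fin k, HasRainbowTriangle c ∨ HasMonoCopy c H

/-- The `k`-color Gallai–Ramsey number `gr_k(K₃ : H)`: the minimum `N` such that for all
`n ≥ N`, every `k`-coloring of the edges of `K_n` contains a rainbow triangle or a
monochromatic copy of `H`. -/
noncomputable def gr {W : Type*} (k : ℕ) (H : SimpleGraph W) : ℕ :=
  sInf {N | ∀ n, N ≤ n → grProp k H n}

namespace GRaux

def g : ℕ → ℕ
  | 0 => 1
  | 1 => 2
  | (n+2) => 5 * g n

lemma g_two : ∀ n, g (n+2) = 5 * g n := fun _ => rfl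

lemma g_pos : ∀ n, 1 ≤ g n := by
  intro n
  induction n using Nat.strong_induction_on with
  | _ n IH =>
    match n with
    | 0 => simp [g]
    | 1 => simp [g]
    | (m+2) => have := IH m (by omega); simp only [g]; omega

lemma g_mono : ∀ n, g n ≤ g (n+1) := by
  intro n
  induction n using Nat.strong_induction_on with
  | _ n IH =>
    match n with
    | 0 => simp [g]
    | 1 => simp [g]
    | (m+2) =>
      have := IH m (by omega)
      show g (m+2) ≤ g (m+3)
      rw [g_two, g_two]; omega

lemma gR2 : ∀ n, 2 * g (n+1) ≤ 5 * g n := by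
  intro n
  induction n using Nat.strong_induction_on with
  | _ n IH =>
    match n with
    | 0 => simp [g]
    | 1 => simp [g]
    | (m+2) =>
      have := IH m (by omega)
      show 2 * g (m+3) ≤ 5 * g (m+2)
      rw [g_two, g_two]; omega

lemma gR3 : ∀ n, g (n+1) ≤ 3 * g n := by
  intro n
  induction n using Nat.strong_induction_on with
  | _ n IH =>
    match n with
    | 0 => simp [g]
    | 1 => simp [g]
    | (m+2) =>
      have := IH m (by omega)
      show g (m+3) ≤ 3 * g (m+2)
      rw [g_two, g_two]; omega

lemma g_even : ∀ t, g (2*t) = 5^t := by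
  intro t
  induction t with
  | zero => rfl
  | succ t ih =>
    have : 2*(t+1) = (2*t)+2 := by ring
    rw [this, g_two, ih, pow_succ]; ring

lemma g_odd : ∀ t, g (2*t+1) = 2 * 5^t := by
  intro t
  induction t with
  | zero => rfl
  | succ t ih =>
    have : 2*(t+1)+1 = (2*t+1)+2 := by ring
    rw [this, g_two, ih, pow_succ]; ring

/-- 2-coloring of K₅ whose color classes are two 5-cycles. -/
def pent (a b : Fin 5) : ℕ :=
  if (a.val + 1) % 5 = b.val ∨ (b.val + 1) % 5 = a.val then 0 else 1

lemma pent_symm : ∀ a b, pent a b = pent b a := by decide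

lemma pent_lt : ∀ a b, pent a b < 2 := by
  intro a b; unfold pent; split <;> omega

lemma pent_nomono : ∀ a b c : Fin 5, a ≠ b → a ≠ c → b ≠ c →
    ¬(pent a b = pent a c ∧ pent a b = pent b c) := by decide

variable {t : ℕ}

/-- first coordinate where x and y differ -/
lemma fd_nonempty (x y : Fin t → Fin 5) (h : x ≠ y) :
    (Finset.univ.filter fun i => x i ≠ y i).Nonempty := by
  obtain ⟨i, hi⟩ := Function.ne_iff.mp h
  exact ⟨i, by simp [hi]⟩

def fd (x y : Fin t → Fin 5) (h : x ≠ y) : Fin t :=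
  (Finset.univ.filter fun i => x i ≠ y i).min' (fd_nonempty x y h)

lemma fd_ne (x y : Fin t → Fin 5) (h : x ≠ y) : x (fd x y h) ≠ y (fd x y h) := by
  have := Finset.min'_mem (Finset.univ.filter fun i => x i ≠ y i) (fd_nonempty x y h)
  simpa [fd] using this

lemma fd_agree (x y : Fin t → Fin 5) (h : x ≠ y) (i : Fin t) (hi : i < fd x y h) :
    x i = y i := by
  by_contra hne
  have hmem : i ∈ Finset.univ.filter fun i => x i ≠ y i := by simp [hne]
  have := Finset.min'_le _ i hmem
  exact absurd (lt_of_lt_of_le hi this) (lt_irrefl _)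

lemma fd_eq (x y : Fin t → Fin 5) (h : x ≠ y) (i : Fin t)
    (h1 : x i ≠ y i) (h2 : ∀ j, j < i → x j = y j) : fd x y h = i := by
  apply le_antisymm
  · exact Finset.min'_le _ i (by simp [h1])
  · by_contra hlt
    push_neg at hlt
    exact fd_ne x y h (h2 _ hlt)

lemma fd_symm (x y : Fin t → Fin 5) (h : x ≠ y) : fd x y h = fd y x h.symm := by
  have hset : (Finset.univ.filter fun i => x i ≠ y i)
      = (Finset.univ.filter fun i => y i ≠ x i) := by
    apply Finset.filter_congr; intro i _; simp [ne_comm]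
  simp only [fd, hset]

/-- iterated-blow-up coloring on (Fin t → Fin 5) -/
def colE (x y : Fin t → Fin 5) : ℕ :=
  if h : x = y then 0 else 2 * (fd x y h).val + pent (x (fd x y h)) (y (fd x y h))

lemma colE_symm (x y : Fin t → Fin 5) : colE x y = colE y x := by
  by_cases h : x = y
  · subst h; rfl
  · rw [colE, colE, dif_neg h, dif_neg (Ne.symm h)]
    rw [← fd_symm x y h, pent_symm]

lemma colE_lt (x y : Fin t → Fin 5) (h : x ≠ y) : colE x y < 2 * t := by
  rw [colE, dif_neg h]
  have h1 := (fd x y h).isLt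
  have h2 := pent_lt (x (fd x y h)) (y (fd x y h))
  omega

lemma colE_eval (x y : Fin t → Fin 5) (h : x ≠ y) :
    colE x y = 2 * (fd x y h).val + pent (x (fd x y h)) (y (fd x y h)) := by
  rw [colE, dif_neg h]

/-- helper: if fd x y < fd x z then colE y z = colE x y -/
lemma colE_H1 (x y z : Fin t → Fin 5) (hxy : x ≠ y) (hxz : x ≠ z)
    (hlt : (fd x y hxy : Fin t) < fd x z hxz) : z ≠ y ∧ colE y z = colE x y := by
  set i := fd x y hxy with hi
  have hzx : z i = x i := (fd_agree x z hxz i hlt).symm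
  have hxyne : x i ≠ y i := fd_ne x y hxy
  have hyz : y i ≠ z i := by rw [hzx]; exact fun hc => hxyne hc.symm
  have hne : y ≠ z := fun hc => hyz (by rw [hc])
  have hagree : ∀ j, j < i → y j = z j := by
    intro j hj
    have h1 : x j = y j := fd_agree x y hxy j hj
    have h2 : x j = z j := fd_agree x z hxz j (lt_trans hj hlt)
    rw [← h1, ← h2]
  have hfd : fd y z hne = i := fd_eq y z hne i hyz hagree
  constructor
  · exact hne.symm
  · rw [colE_eval y z hne, colE_eval x y hxy, hfd, ← hi, hzx, pent_symm]

lemma colE_gallai (x y z : Fin t → Fin 5) (hxy : x ≠ y) (hxz : x ≠ z) (hyz : y ≠ z) :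
    colE x y = colE x z ∨ colE x y = colE y z ∨ colE x z = colE y z := by
  set i := fd x y hxy with hidef
  set j := fd x z hxz with hjdef
  rcases lt_trichotomy i j with hlt | heq | hgt
  · right; left; exact (colE_H1 x y z hxy hxz hlt).2.symm
  · -- i = j
    set l := fd y z hyz with hldef
    have hyzag : ∀ a : Fin t, a < i → y a = z a := by
      intro a ha
      rw [← fd_agree x y hxy a ha, fd_agree x z hxz a (lt_of_lt_of_eq ha heq)]
    have hil : i ≤ l := by
      by_contra hc
      push_neg at hc
      exact fd_ne y z hyz (hyzag l hc)
    rcases lt_or_eq_of_le hil with hil' | hil'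
    · -- i < l : y i = z i
      left
      have hyi : y i = z i := fd_agree y z hyz i hil'
      rw [colE_eval x y hxy, colE_eval x z hxz, ← hidef, ← hjdef, ← heq, hyi]
    · -- l = i : three values pairwise distinct
      have e1 : x i ≠ y i := fd_ne x y hxy
      have e2 : x i ≠ z i := by rw [heq]; exact fd_ne x z hxz
      have e3 : y i ≠ z i := by rw [hil']; exact fd_ne y z hyz
      have p1 := pent_lt (x i) (y i)
      have p2 := pent_lt (x i) (z i)
      have p3 := pent_lt (y i) (z i)
      have hC1 : colE x y = 2 * i.val + pent (x i) (y i) := colE_eval x y hxy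
      have hC2 : colE x z = 2 * i.val + pent (x i) (z i) := by
        rw [colE_eval x z hxz, ← hjdef, ← heq]
      have hC3 : colE y z = 2 * i.val + pent (y i) (z i) := by
        rw [colE_eval y z hyz, ← hldef, hil']
      have := pent_nomono (x i) (y i) (z i) e1 e2 e3
      rcases Nat.lt_trichotomy (pent (x i) (y i)) (pent (x i) (z i)) with h | h | h
      · rcases Nat.lt_trichotomy (pent (x i) (y i)) (pent (y i) (z i)) with h' | h' | h'
        · right; right; rw [hC2, hC3]; omega
        · right; left; rw [hC1, hC3, h']
        · right; right; rw [hC2, hC3]; omega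
      · left; rw [hC1, hC2, h]
      · rcases Nat.lt_trichotomy (pent (x i) (y i)) (pent (y i) (z i)) with h' | h' | h'
        · right; right; rw [hC2, hC3]; omega
        · right; left; rw [hC1, hC3, h']
        · right; right; rw [hC2, hC3]; omega
  · -- j < i
    right; right
    have := (colE_H1 x z y hxz hxy hgt).2
    rw [colE_symm z y] at this
    exact this.symm

lemma colE_nomono (x y z : Fin t → Fin 5) (hxy : x ≠ y) (hxz : x ≠ z) (hyz : y ≠ z) :
    ¬(colE x y = colE x z ∧ colE x y = colE y z) := by
  rintro ⟨h1, h2⟩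
  rw [colE_eval x y hxy, colE_eval x z hxz] at h1
  rw [colE_eval x y hxy] at h2
  rw [colE_eval y z hyz] at h2
  have p1 := pent_lt (x (fd x y hxy)) (y (fd x y hxy))
  have p2 := pent_lt (x (fd x z hxz)) (z (fd x z hxz))
  have p3 := pent_lt (y (fd y z hyz)) (z (fd y z hyz))
  have hij : (fd x y hxy).val = (fd x z hxz).val := by omega
  have hil : (fd x y hxy).val = (fd y z hyz).val := by omega
  have hij' : fd x y hxy = fd x z hxz := Fin.ext hij
  have hil' : fd x y hxy = fd y z hyz := Fin.ext hil
  have key1 : pent (x (fd x y hxy)) (y (fd x y hxy))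
      = pent (x (fd x z hxz)) (z (fd x z hxz)) := by omega
  have key2 : pent (x (fd x y hxy)) (y (fd x y hxy))
      = pent (y (fd y z hyz)) (z (fd y z hyz)) := by omega
  rw [← hij'] at key1
  rw [← hil'] at key2
  have e1 : x (fd x y hxy) ≠ y (fd x y hxy) := fd_ne x y hxy
  have e2 : x (fd x y hxy) ≠ z (fd x y hxy) := by rw [hij']; exact fd_ne x z hxz
  have e3 : y (fd x y hxy) ≠ z (fd x y hxy) := by rw [hil']; exact fd_ne y z hyz
  exact pent_nomono _ _ _ e1 e2 e3 ⟨key1, key2⟩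

/-- the odd coloring on Fin 2 × (Fin t → Fin 5) -/
def colO (u v : Fin 2 × (Fin t → Fin 5)) : ℕ :=
  if u.1 = v.1 then colE u.2 v.2 else 2 * t

lemma colO_symm (u v : Fin 2 × (Fin t → Fin 5)) : colO u v = colO v u := by
  by_cases h : u.1 = v.1
  · rw [colO, colO, if_pos h, if_pos h.symm, colE_symm]
  · rw [colO, colO, if_neg h, if_neg (Ne.symm h)]

lemma colO_lt (u v : Fin 2 × (Fin t → Fin 5)) (h : u ≠ v) : colO u v < 2 * t + 1 := by
  rw [colO]
  split
  · rename_i h1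
    by_cases h2 : u.2 = v.2
    · exact absurd (Prod.ext h1 h2) h
    · have := colE_lt u.2 v.2 h2; omega
  · omega

lemma snd_ne {u v : Fin 2 × (Fin t → Fin 5)} (h : u ≠ v) (h1 : u.1 = v.1) : u.2 ≠ v.2 :=
  fun h2 => h (Prod.ext h1 h2)

lemma fin2_cases {a b c : Fin 2} (hab : a ≠ b) (hac : a ≠ c) : b = c := by omega

lemma colO_gallai (x y z : Fin 2 × (Fin t → Fin 5)) (hxy : x ≠ y) (hxz : x ≠ z) (hyz : y ≠ z) :
    colO x y = colO x z ∨ colO x y = colO y z ∨ colO x z = colO y z := by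
  by_cases hab : x.1 = y.1
  · by_cases hac : x.1 = z.1
    · have hbc : y.1 = z.1 := by rw [← hab, hac]
      rw [colO, colO, colO, if_pos hab, if_pos hac, if_pos hbc]
      exact colE_gallai x.2 y.2 z.2 (snd_ne hxy hab) (snd_ne hxz hac) (snd_ne hyz hbc)
    · have hbc : y.1 ≠ z.1 := by rw [← hab]; exact hac
      right; right
      rw [colO, colO, if_neg hac, if_neg hbc]
  · by_cases hac : x.1 = z.1
    · have hbc : y.1 ≠ z.1 := fun h => hab (by rw [hac, ← h])
      right; left
      rw [colO, colO, if_neg hab, if_neg hbc]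
    · left
      rw [colO, colO, if_neg hab, if_neg hac]

lemma colO_nomono (x y z : Fin 2 × (Fin t → Fin 5)) (hxy : x ≠ y) (hxz : x ≠ z) (hyz : y ≠ z) :
    ¬(colO x y = colO x z ∧ colO x y = colO y z) := by
  rintro ⟨h1, h2⟩
  by_cases hab : x.1 = y.1
  · by_cases hac : x.1 = z.1
    · have hbc : y.1 = z.1 := by rw [← hab, hac]
      rw [colO, colO, if_pos hab, if_pos hac] at h1
      rw [colO, colO, if_pos hab, if_pos hbc] at h2
      exact colE_nomono x.2 y.2 z.2 (snd_ne hxy hab) (snd_ne hxz hac) (snd_ne hyz hbc) ⟨h1, h2⟩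
    · rw [colO, colO, if_pos hab, if_neg hac] at h1
      have := colE_lt x.2 y.2 (snd_ne hxy hab); omega
  · by_cases hac : x.1 = z.1
    · rw [colO, colO, if_neg hab, if_pos hac] at h1
      have := colE_lt x.2 z.2 (snd_ne hxz hac); omega
    · have hbc : y.1 = z.1 := fin2_cases hab hac
      rw [colO, colO, if_neg hab, if_pos hbc] at h2
      have := colE_lt y.2 z.2 (snd_ne hyz hbc); omega

lemma arith (G0 G1 a p2 : ℕ) (h1 : 1 ≤ G0) (h2 : G0 ≤ G1) (h3 : 2*G1 ≤ 5*G0)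
    (h4 : G1 ≤ 3*G0) (hm2 : 2 ≤ a + p2) (hm5 : a + p2 ≤ 5)
    (hc1 : a + p2 ≤ 2 ∨ a ≤ 1) (hc2 : a + p2 ≤ 3 ∨ a = 0) :
    a * G1 + p2 * G0 ≤ 5 * G0 := by
  have ha : a ≤ 5 := by omega
  have hp : p2 ≤ 5 := by omega
  interval_cases a <;> interval_cases p2 <;> omega

section Main2
variable {V : Type} [DecidableEq V] {α : Type} [DecidableEq α]


def Sym (c : V → V → α) : Prop := ∀ x y, c x y = c y x

def GallaiOn (c : V → V → α) (s : Finset V) : Prop :=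
  ∀ x ∈ s, ∀ y ∈ s, ∀ z ∈ s, x ≠ y → x ≠ z → y ≠ z →
    (c x y = c x z ∨ c x y = c y z ∨ c x z = c y z)

def MonoTri (c : V → V → α) (s : Finset V) : Prop :=
  ∃ x ∈ s, ∃ y ∈ s, ∃ z ∈ s, x ≠ y ∧ x ≠ z ∧ y ≠ z ∧ c x y = c x z ∧ c x y = c y z

def HAdj (c : V → V → α) (s : Finset V) (r b : α) (x y : V) : Prop :=
  x ∈ s ∧ y ∈ s ∧ x ≠ y ∧ c x y ≠ r ∧ c x y ≠ b

def Reach (c : V → V → α) (s : Finset V) (r b : α) : V → V → Prop :=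
  Relation.ReflTransGen (HAdj c s r b)

def GPart (c : V → V → α) (s : Finset V) (P : Finset (Finset V)) (r b : α) : Prop :=
  2 ≤ P.card ∧ (∀ A ∈ P, A.Nonempty ∧ A ⊆ s) ∧ (∀ x ∈ s, ∃ A ∈ P, x ∈ A) ∧
  (∀ A ∈ P, ∀ B ∈ P, ∀ x, x ∈ A → x ∈ B → A = B) ∧
  (∀ A ∈ P, ∀ B ∈ P, A ≠ B → ∃ d, (d = r ∨ d = b) ∧ ∀ x ∈ A, ∀ y ∈ B, c x y = d)

lemma components (c : V → V → α) (s : Finset V) (r b : α) (hsym : Sym c)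
    (hG : GallaiOn c s) {x0 y0 : V} (hx0 : x0 ∈ s) (hy0 : y0 ∈ s)
    (hnr : ¬ Reach c s r b x0 y0) : ∃ P, GPart c s P r b := by
  classical
  have hadj_symm : Symmetric (HAdj c s r b) := by
    rintro a a' ⟨h1, h2, h3, h4, h5⟩
    exact ⟨h2, h1, h3.symm, by rw [hsym a' a]; exact h4, by rw [hsym a' a]; exact h5⟩
  have hRsym : ∀ {u w}, Reach c s r b u w → Reach c s r b w u :=
    fun h => @Std.Symm.symm _ (Relation.ReflTransGen (HAdj c s r b)) (@Relation.ReflTransGen.stdSymm _ _ ⟨fun _ _ h' => hadj_symm h'⟩) _ _ h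
  have hconst : ∀ x ∈ s, ∀ y ∈ s, ¬ Reach c s r b x y →
      ∀ x', Reach c s r b x x' → c x' y = c x y := by
    intro x hx y hy hnR x' hR
    induction hR with
    | refl => rfl
    | @tail w w' hxw hadj ih =>
      obtain ⟨hw, hw', hne, hr1, hb1⟩ := hadj
      have hnRw : ¬ Reach c s r b w y := fun h => hnR (Relation.ReflTransGen.trans hxw h)
      have hwny : w ≠ y := fun he => hnRw (he ▸ Relation.ReflTransGen.refl)
      have hnRw' : ¬ Reach c s r b w' y := fun h =>
        hnR (Relation.ReflTransGen.trans (hxw.tail ⟨hw, hw', hne, hr1, hb1⟩) h)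
      have hw'ny : w' ≠ y := fun he => hnRw' (he ▸ Relation.ReflTransGen.refl)
      have hwy : c w y = r ∨ c w y = b := by
        by_contra hcon; push_neg at hcon
        exact hnRw (Relation.ReflTransGen.single ⟨hw, hy, hwny, hcon.1, hcon.2⟩)
      have hw'y : c w' y = r ∨ c w' y = b := by
        by_contra hcon; push_neg at hcon
        exact hnRw' (Relation.ReflTransGen.single ⟨hw', hy, hw'ny, hcon.1, hcon.2⟩)
      have hfin : c w y = c w' y := by
        rcases hG w hw w' hw' y hy hne hwny hw'ny with h | h | h
        · exfalso; rcases hwy with h' | h'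
          · exact hr1 (h.trans h')
          · exact hb1 (h.trans h')
        · exfalso; rcases hw'y with h' | h'
          · exact hr1 (h.trans h')
          · exact hb1 (h.trans h')
        · exact h
      rw [← hfin]; exact ih
  set cls : V → Finset V := fun x => s.filter (Reach c s r b x) with hclsdef
  have hclsmem : ∀ x ∈ s, x ∈ cls x := fun x hx =>
    Finset.mem_filter.2 ⟨hx, Relation.ReflTransGen.refl⟩
  have hclsmem' : ∀ x w, w ∈ cls x → w ∈ s ∧ Reach c s r b x w := fun x w hw => by
    simpa [hclsdef, Finset.mem_filter] using hw
  have hcls_eq : ∀ u w, Reach c s r b u w → cls u = cls w := by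
    intro u w hR
    ext a
    simp only [hclsdef, Finset.mem_filter, and_congr_right_iff]
    intro _
    exact ⟨fun h => Relation.ReflTransGen.trans (hRsym hR) h,
           fun h => Relation.ReflTransGen.trans hR h⟩
  refine ⟨s.image cls, ?_, ?_, ?_, ?_, ?_⟩
  · refine Finset.one_lt_card.2
      ⟨cls x0, Finset.mem_image_of_mem cls hx0, cls y0, Finset.mem_image_of_mem cls hy0, ?_⟩
    intro h
    have := hclsmem y0 hy0
    rw [← h] at this
    exact hnr (hclsmem' x0 y0 this).2
  · intro A hA
    obtain ⟨u, hu, rfl⟩ := Finset.mem_image.1 hA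
    exact ⟨⟨u, hclsmem u hu⟩, Finset.filter_subset _ _⟩
  · intro x hx
    exact ⟨cls x, Finset.mem_image_of_mem cls hx, hclsmem x hx⟩
  · intro A hA B hB x hxA hxB
    obtain ⟨u, hu, rfl⟩ := Finset.mem_image.1 hA
    obtain ⟨u', hu', rfl⟩ := Finset.mem_image.1 hB
    exact hcls_eq u u' (Relation.ReflTransGen.trans (hclsmem' u x hxA).2
      (hRsym (hclsmem' u' x hxB).2))
  · intro A hA B hB hAB
    obtain ⟨u, hu, rfl⟩ := Finset.mem_image.1 hA
    obtain ⟨u', hu', rfl⟩ := Finset.mem_image.1 hB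
    have hnuu' : ¬ Reach c s r b u u' := fun h => hAB (hcls_eq u u' h)
    have hne : u ≠ u' := fun he => hnuu' (he ▸ Relation.ReflTransGen.refl)
    have hd : c u u' = r ∨ c u u' = b := by
      by_contra hcon; push_neg at hcon
      exact hnuu' (Relation.ReflTransGen.single ⟨hu, hu', hne, hcon.1, hcon.2⟩)
    refine ⟨c u u', hd, ?_⟩
    intro x hxA y hyB
    obtain ⟨hxs, hux⟩ := hclsmem' u x hxA
    obtain ⟨hys, hu'y⟩ := hclsmem' u' y hyB
    have hnu'x : ¬ Reach c s r b u' x := fun h => hnuu' (Relation.ReflTransGen.trans hux (hRsym h))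
    calc c x y = c y x := hsym x y
      _ = c u' x := hconst u' hu' x hxs hnu'x y hu'y
      _ = c x u' := hsym u' x
      _ = c u u' := hconst u hu u' hu' hnuu' x hux

theorem GT : ∀ (n : ℕ) (s : Finset V) (c : V → V → α), s.card = n → Sym c → GallaiOn c s →
    2 ≤ s.card → ∃ P r b, GPart c s P r b := by
  intro n
  induction n using Nat.strong_induction_on with
  | _ n IH =>
  intro s c hn hsym hG hs2
  classical
  by_cases hs2' : s.card = 2
  · -- base case
    obtain ⟨x, y, hxy, hsxy⟩ := Finset.card_eq_two.1 hs2'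
    refine ⟨{{x}, {y}}, c x y, c x y, ?_, ?_, ?_, ?_, ?_⟩
    · have hne : ({x} : Finset V) ≠ {y} := by simp [hxy]
      rw [Finset.card_insert_of_notMem (by simp [hne]), Finset.card_singleton]
    · intro A hA
      rcases Finset.mem_insert.1 hA with rfl | hA
      · exact ⟨⟨x, Finset.mem_singleton_self x⟩, by simp [hsxy]⟩
      · rw [Finset.mem_singleton.1 hA]
        exact ⟨⟨y, Finset.mem_singleton_self y⟩, by simp [hsxy]⟩
    · intro w hw
      rw [hsxy] at hw
      rcases Finset.mem_insert.1 hw with h | h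
      · exact ⟨{x}, by simp, by rw [h]; exact Finset.mem_singleton_self x⟩
      · exact ⟨{y}, by simp, by rw [Finset.mem_singleton.1 h]; exact Finset.mem_singleton_self y⟩
    · intro A hA B hB w hwA hwB
      rcases Finset.mem_insert.1 hA with rfl | hA
      · rcases Finset.mem_insert.1 hB with rfl | hB
        · rfl
        · rw [Finset.mem_singleton.1 hB] at hwB ⊢
          exact absurd (Finset.mem_singleton.1 hwA ▸ Finset.mem_singleton.1 hwB) (by simpa using hxy)
      · rcases Finset.mem_insert.1 hB with rfl | hB
        · rw [Finset.mem_singleton.1 hA] at hwA ⊢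
          exact absurd (Finset.mem_singleton.1 hwA ▸ Finset.mem_singleton.1 hwB) (by simpa using hxy.symm)
        · rw [Finset.mem_singleton.1 hA, Finset.mem_singleton.1 hB]
    · intro A hA B hB hAB
      rcases Finset.mem_insert.1 hA with rfl | hA'
      · rcases Finset.mem_insert.1 hB with rfl | hB'
        · exact absurd rfl hAB
        · rw [Finset.mem_singleton.1 hB']
          refine ⟨c x y, Or.inl rfl, ?_⟩
          intro u hu w hw
          rw [Finset.mem_singleton.1 hu, Finset.mem_singleton.1 hw]
      · rcases Finset.mem_insert.1 hB with rfl | hB'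
        · rw [Finset.mem_singleton.1 hA']
          refine ⟨c x y, Or.inl rfl, ?_⟩
          intro u hu w hw
          rw [Finset.mem_singleton.1 hu, Finset.mem_singleton.1 hw, hsym y x]
        · rw [Finset.mem_singleton.1 hA', Finset.mem_singleton.1 hB'] at hAB
          exact absurd rfl hAB
  · -- inductive step
    have hs3 : 3 ≤ s.card := by omega
    obtain ⟨v, hv⟩ : s.Nonempty := Finset.card_pos.1 (by omega)
    have hs'card : (s.erase v).card = s.card - 1 := Finset.card_erase_of_mem hv
    have hsub : s.erase v ⊆ s := Finset.erase_subset v s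
    have hG' : GallaiOn c (s.erase v) := fun x hx y hy z hz =>
      hG x (hsub hx) y (hsub hy) z (hsub hz)
    obtain ⟨P, r, b, hP⟩ := IH (s.card - 1) (by omega) (s.erase v) c (by omega) hsym hG'
      (by omega)
    obtain ⟨hPcard, hPparts, hPcover, hPdisj, hPmono⟩ := hP
    set NG := (s.erase v).filter (fun y => c v y ≠ r ∧ c v y ≠ b) with hNGdef
    have hNGmem : ∀ y, y ∈ NG → (y ∈ s.erase v ∧ c v y ≠ r ∧ c v y ≠ b) := fun y hy => by
      simpa [hNGdef, Finset.mem_filter] using hy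
    have hNGmem' : ∀ y, y ∈ s.erase v → c v y ≠ r → c v y ≠ b → y ∈ NG := fun y h1 h2 h3 =>
      Finset.mem_filter.2 ⟨h1, h2, h3⟩
    have hs'v : ∀ y ∈ s.erase v, y ≠ v ∧ y ∈ s := fun y hy =>
      ⟨(Finset.mem_erase.1 hy).1, hsub hy⟩
    by_cases hcase : ∃ B ∈ P, ∀ y ∈ B, y ∉ NG
    · -- some part misses NG: that part cannot reach v
      obtain ⟨B, hB, hmiss⟩ := hcase
      obtain ⟨x, hxB⟩ := (hPparts B hB).1
      have hBs' : B ⊆ s.erase v := (hPparts B hB).2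
      have hinv : ∀ w, Reach c s r b x w → w ∈ B := by
        intro w hw
        induction hw with
        | refl => exact hxB
        | @tail w1 w2 hxw hadj ih =>
          obtain ⟨hw1s, hw2s, hne, hcr, hcb⟩ := hadj
          by_cases hw2v : w2 = v
          · exfalso
            apply hmiss w1 ih
            rw [hw2v] at hcr hcb
            refine hNGmem' w1 (hBs' ih) ?_ ?_
            · rw [hsym v w1]; exact hcr
            · rw [hsym v w1]; exact hcb
          · have hw2s' : w2 ∈ s.erase v := Finset.mem_erase.2 ⟨hw2v, hw2s⟩
            obtain ⟨C, hC, hw2C⟩ := hPcover w2 hw2s'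
            by_cases hCB : C = B
            · exact hCB ▸ hw2C
            · exfalso
              obtain ⟨d, hd, hmono⟩ := hPmono B hB C hC (fun h => hCB h.symm)
              have huv := hmono w1 ih w2 hw2C
              rcases hd with h' | h'
              · exact hcr (by rw [huv, h'])
              · exact hcb (by rw [huv, h'])
      have hnrv : ¬ Reach c s r b x v := by
        intro h
        exact (Finset.mem_erase.1 (hBs' (hinv v h))).1 rfl
      obtain ⟨P2, hP2⟩ := components c s r b hsym hG (hsub (hBs' hxB)) hv hnrv
      exact ⟨P2, r, b, hP2⟩
    · -- every part meets NG
      push_neg at hcase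
      obtain ⟨A, hA, B, hB, hAB⟩ := Finset.one_lt_card.1 hPcard
      obtain ⟨x, hxA, hxNG⟩ := hcase A hA
      obtain ⟨z, hzB, hzNG⟩ := hcase B hB
      have hdiffmem : ∀ C ∈ P, ∀ D ∈ P, C ≠ D → ∀ y ∈ C, ∀ u ∈ D, y ≠ u := by
        intro C hC D hD hCD y hyC u huD heq
        exact hCD (hPdisj C hC D hD y hyC (heq ▸ huD))
      have htri : ∀ C ∈ P, ∀ D ∈ P, C ≠ D → ∀ y ∈ C, y ∈ NG → ∀ u ∈ D, u ∈ NG →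
          c v y = c v u := by
        intro C hC D hD hCD y hyC hyNG u huD huNG
        obtain ⟨hys', hyr, hyb⟩ := hNGmem y hyNG
        obtain ⟨hus', hur, hub⟩ := hNGmem u huNG
        obtain ⟨d, hd, hmono⟩ := hPmono C hC D hD hCD
        have hyu : y ≠ u := hdiffmem C hC D hD hCD y hyC u huD
        have hcyu : c y u = d := hmono y hyC u huD
        rcases hG v hv y (hs'v y hys').2 u (hs'v u hus').2 (Ne.symm (hs'v y hys').1)
          (Ne.symm (hs'v u hus').1) hyu with h | h | h
        · exact h
        · exfalso; rcases hd with h' | h'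
          · exact hyr (by rw [h, hcyu, h'])
          · exact hyb (by rw [h, hcyu, h'])
        · exfalso; rcases hd with h' | h'
          · exact hur (by rw [h, hcyu, h'])
          · exact hub (by rw [h, hcyu, h'])
      have hNGcol : ∀ y ∈ NG, c v y = c v x := by
        intro y hyNG
        obtain ⟨hys', _, _⟩ := hNGmem y hyNG
        obtain ⟨C, hC, hyC⟩ := hPcover y hys'
        by_cases hCA : C = A
        · subst hCA
          have h1 := htri C hA B hB hAB y hyC hyNG z hzB hzNG
          have h2 := htri C hA B hB hAB x hxA hxNG z hzB hzNG
          rw [h1, ← h2]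
        · exact htri C hC A hA hCA y hyC hyNG x hxA hxNG
      have hdag : ∀ w ∈ s.erase v, w ∉ NG → ∀ C ∈ P, ∀ D ∈ P, C ≠ D → ∀ u ∈ C, u ∈ NG →
          w ∈ D → c v w = c u w := by
        intro w hws' hwNG C hC D hD hCD u huC huNG hwD
        obtain ⟨hus', hur, hub⟩ := hNGmem u huNG
        have hwrb : c v w = r ∨ c v w = b := by
          by_contra hc; push_neg at hc
          exact hwNG (hNGmem' w hws' hc.1 hc.2)
        obtain ⟨d, hd, hmono⟩ := hPmono C hC D hD hCD
        have huw : u ≠ w := hdiffmem C hC D hD hCD u huC w hwD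
        have hcuw : c u w = d := hmono u huC w hwD
        rcases hG v hv u (hs'v u hus').2 w (hs'v w hws').2 (Ne.symm (hs'v u hus').1)
          (Ne.symm (hs'v w hws').1) huw with h | h | h
        · exfalso; rcases hwrb with h' | h'
          · exact hur (by rw [h, h'])
          · exact hub (by rw [h, h'])
        · exfalso; rcases hd with h' | h'
          · exact hur (by rw [h, hcuw, h'])
          · exact hub (by rw [h, hcuw, h'])
        · exact h
      have hPcol : ∀ w ∈ s.erase v, w ∉ NG → ∀ w' ∈ s.erase v, w' ∉ NG →
          c v w = c v w' := by
        intro w hws' hwNG w' hw's' hw'NG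
        obtain ⟨Cw, hCw, hwCw⟩ := hPcover w hws'
        obtain ⟨Cw', hCw', hw'Cw'⟩ := hPcover w' hw's'
        by_cases hsame : Cw = Cw'
        · subst hsame
          have hexD : ∃ D ∈ P, D ≠ Cw := by
            by_cases hACw : A = Cw
            · exact ⟨B, hB, fun h => hAB (hACw.trans h.symm)⟩
            · exact ⟨A, hA, hACw⟩
          obtain ⟨D, hD, hDCw⟩ := hexD
          obtain ⟨u, huD, huNG⟩ := hcase D hD
          have h1 := hdag w hws' hwNG D hD Cw hCw hDCw u huD huNG hwCw
          have h2 := hdag w' hw's' hw'NG D hD Cw hCw hDCw u huD huNG hw'Cw'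
          obtain ⟨d, hd, hmono⟩ := hPmono D hD Cw hCw hDCw
          rw [h1, h2, hmono u huD w hwCw, hmono u huD w' hw'Cw']
        · obtain ⟨u, huCw, huNG⟩ := hcase Cw hCw
          obtain ⟨u', hu'Cw', hu'NG⟩ := hcase Cw' hCw'
          have h1 := hdag w hws' hwNG Cw' hCw' Cw hCw (Ne.symm hsame) u' hu'Cw' hu'NG hwCw
          have h2 := hdag w' hw's' hw'NG Cw hCw Cw' hCw' hsame u huCw huNG hw'Cw'
          obtain ⟨d1, hd1, hmono1⟩ := hPmono Cw' hCw' Cw hCw (Ne.symm hsame)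
          have e1 : c u' w = d1 := hmono1 u' hu'Cw' w hwCw
          have e2 : c w' u = d1 := hmono1 w' hw'Cw' u huCw
          rw [h1, h2, e1, hsym u w', e2]
      obtain ⟨y0, hy0⟩ : (s.erase v).Nonempty := Finset.card_pos.1 (by omega)
      have hiso : ∀ (r' b' : α), (∀ y ∈ s, y ≠ v → (c v y = r' ∨ c v y = b')) →
          ¬ Reach c s r' b' v y0 := by
        intro r' b' hcol hreach
        have hy0v : y0 ≠ v := (hs'v y0 hy0).1
        rcases Relation.ReflTransGen.cases_head hreach with h | ⟨w, hadj, _⟩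
        · exact hy0v h.symm
        · obtain ⟨_, hws, hne, hcr, hcb⟩ := hadj
          rcases hcol w hws hne.symm with h | h
          · exact hcr h
          · exact hcb h
      by_cases hallNG : ∀ y ∈ s.erase v, y ∈ NG
      · have hcol : ∀ y ∈ s, y ≠ v → (c v y = c v x ∨ c v y = c v x) := by
          intro y hys hyv
          exact Or.inl (hNGcol y (hallNG y (Finset.mem_erase.2 ⟨hyv, hys⟩)))
        obtain ⟨P2, hP2⟩ := components c s (c v x) (c v x) hsym hG hv (hsub hy0)
          (hiso (c v x) (c v x) hcol)
        exact ⟨P2, c v x, c v x, hP2⟩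
      · push_neg at hallNG
        obtain ⟨w0, hw0s', hw0NG⟩ := hallNG
        have hcol : ∀ y ∈ s, y ≠ v → (c v y = c v x ∨ c v y = c v w0) := by
          intro y hys hyv
          have hys' : y ∈ s.erase v := Finset.mem_erase.2 ⟨hyv, hys⟩
          by_cases hyNG : y ∈ NG
          · exact Or.inl (hNGcol y hyNG)
          · exact Or.inr (hPcol y hys' hyNG w0 hw0s' hw0NG)
        obtain ⟨P2, hP2⟩ := components c s (c v x) (c v w0) hsym hG hv (hsub hy0)
          (hiso (c v x) (c v w0) hcol)
        exact ⟨P2, c v x, c v w0, hP2⟩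



theorem counting : ∀ (k : ℕ) (s : Finset V) (c : V → V → α) (S : Finset α),
    Sym c → GallaiOn c s → ¬ MonoTri c s →
    (∀ x ∈ s, ∀ y ∈ s, x ≠ y → c x y ∈ S) → S.card ≤ k → s.card ≤ g k := by
  intro k
  induction k using Nat.strong_induction_on with
  | _ k IH =>
  rcases k with _ | _ | j
  · -- k = 0
    intro s c S hsym hG hM hcol hScard
    by_contra hbig
    push_neg at hbig
    obtain ⟨x, hx, y, hy, hxy⟩ := Finset.one_lt_card.1 (by simpa [g] using hbig)
    have := hcol x hx y hy hxy
    rw [Finset.card_eq_zero.1 (Nat.le_zero.1 hScard)] at this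
    simp at this
  · -- k = 1
    intro s c S hsym hG hM hcol hScard
    by_contra hbig
    push_neg at hbig
    obtain ⟨x, hx, y, hy, z, hz, hxy, hxz, hyz⟩ := Finset.two_lt_card.1 (by simpa [g] using hbig)
    have hle1 := Finset.card_le_one.1 hScard
    exact hM ⟨x, hx, y, hy, z, hz, hxy, hxz, hyz,
      hle1 _ (hcol x hx y hy hxy) _ (hcol x hx z hz hxz),
      hle1 _ (hcol x hx y hy hxy) _ (hcol y hy z hz hyz)⟩
  · -- k = j+2
    intro s c S hsym hG hM hcol hScard
    classical
    by_cases hsmall : s.card ≤ 1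
    · exact le_trans hsmall (g_pos (j+2))
    · have hs2 : 2 ≤ s.card := by omega
      obtain ⟨P, r, b, hPcard, hPparts, hPcover, hPdisj, hPmono⟩ := GT s.card s c rfl hsym hG hs2
      have hGsub : ∀ A : Finset V, A ⊆ s → GallaiOn c A := fun A hAs x hx y hy z hz =>
        hG x (hAs hx) y (hAs hy) z (hAs hz)
      have hMsub : ∀ A : Finset V, A ⊆ s → ¬ MonoTri c A := by
        rintro A hAs ⟨x, hx, y, hy, z, hz, h1, h2, h3, h4, h5⟩
        exact hM ⟨x, hAs hx, y, hAs hy, z, hAs hz, h1, h2, h3, h4, h5⟩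
      have hdiff : ∀ A ∈ P, ∀ B ∈ P, A ≠ B → ∀ x ∈ A, ∀ y ∈ B, x ≠ y := by
        intro A hA B hB hAB x hxA y hyB heq
        exact hAB (hPdisj A hA B hB x hxA (heq ▸ hyB))
      have hopq : ∀ p q d' : α, (p = r ∨ p = b) → (q = r ∨ q = b) → (d' = r ∨ d' = b) →
          p ≠ d' → q ≠ d' → p = q := by
        intro p q d' hp hq hd' hpd hqd
        rcases hp with rfl | rfl <;> rcases hq with rfl | rfl <;>
          rcases hd' with rfl | rfl <;> tauto
      -- every part has size at most g (j+1)
      have hpartcard1 : ∀ A ∈ P, A.card ≤ g (j+1) := by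
        intro A hA
        obtain ⟨B0, hB0, hB0A⟩ := Finset.exists_mem_ne hPcard A
        obtain ⟨y0, hy0⟩ := (hPparts B0 hB0).1
        obtain ⟨x0, hx0⟩ := (hPparts A hA).1
        obtain ⟨d, hd, hmono⟩ := hPmono A hA B0 hB0 (Ne.symm hB0A)
        have hAs : A ⊆ s := (hPparts A hA).2
        have hBs : B0 ⊆ s := (hPparts B0 hB0).2
        have hx0y0 : x0 ≠ y0 := hdiff A hA B0 hB0 (Ne.symm hB0A) x0 hx0 y0 hy0
        have hdS : d ∈ S := by
          rw [← hmono x0 hx0 y0 hy0]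
          exact hcol x0 (hAs hx0) y0 (hBs hy0) hx0y0
        have hcards : (S.erase d).card ≤ j + 1 := by
          rw [Finset.card_erase_of_mem hdS]; omega
        refine IH (j+1) (by omega) A c (S.erase d) hsym (hGsub A hAs) (hMsub A hAs) ?_ hcards
        intro u hu w hw huw
        refine Finset.mem_erase.2 ⟨?_, hcol u (hAs hu) w (hAs hw) huw⟩
        intro hcuwd
        refine hM ⟨u, hAs hu, w, hAs hw, y0, hBs hy0, huw,
          hdiff A hA B0 hB0 (Ne.symm hB0A) u hu y0 hy0,
          hdiff A hA B0 hB0 (Ne.symm hB0A) w hw y0 hy0, ?_, ?_⟩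
        · rw [hcuwd, hmono u hu y0 hy0]
        · rw [hcuwd, hmono w hw y0 hy0]
      -- parts that see two cross colors have size at most g j
      have hpartcard2 : ∀ A ∈ P,
          (∃ B ∈ P, ∃ B' ∈ P, B ≠ A ∧ B' ≠ A ∧ ∃ x ∈ A, ∃ y ∈ B, ∃ x' ∈ A, ∃ y' ∈ B',
            c x y ≠ c x' y') → A.card ≤ g j := by
        intro A hA ⟨B, hB, B', hB', hBA, hB'A, x, hxA, y, hyB, x', hx'A, y', hy'B', hcc⟩
        have hAs : A ⊆ s := (hPparts A hA).2
        have hBs : B ⊆ s := (hPparts B hB).2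
        have hB's : B' ⊆ s := (hPparts B' hB').2
        obtain ⟨d1, hd1, hmono1⟩ := hPmono A hA B hB (Ne.symm hBA)
        obtain ⟨d2, hd2, hmono2⟩ := hPmono A hA B' hB' (Ne.symm hB'A)
        have he1 : c x y = d1 := hmono1 x hxA y hyB
        have he2 : c x' y' = d2 := hmono2 x' hx'A y' hy'B'
        have hd12 : d1 ≠ d2 := by rw [← he1, ← he2]; exact hcc
        have hd1S : d1 ∈ S := by
          rw [← he1]
          exact hcol x (hAs hxA) y (hBs hyB) (hdiff A hA B hB (Ne.symm hBA) x hxA y hyB)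
        have hd2S : d2 ∈ S := by
          rw [← he2]
          exact hcol x' (hAs hx'A) y' (hB's hy'B')
            (hdiff A hA B' hB' (Ne.symm hB'A) x' hx'A y' hy'B')
        have hcards : ((S.erase d1).erase d2).card ≤ j := by
          rw [Finset.card_erase_of_mem (Finset.mem_erase.2 ⟨Ne.symm hd12, hd2S⟩),
            Finset.card_erase_of_mem hd1S]
          have : 1 ≤ S.card := Finset.card_pos.2 ⟨d1, hd1S⟩
          omega
        refine IH j (by omega) A c ((S.erase d1).erase d2) hsym (hGsub A hAs)
          (hMsub A hAs) ?_ hcards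
        intro u hu w hw huw
        refine Finset.mem_erase.2 ⟨?_, Finset.mem_erase.2
          ⟨?_, hcol u (hAs hu) w (hAs hw) huw⟩⟩
        · intro hcuwd
          refine hM ⟨u, hAs hu, w, hAs hw, y', hB's hy'B', huw,
            hdiff A hA B' hB' (Ne.symm hB'A) u hu y' hy'B',
            hdiff A hA B' hB' (Ne.symm hB'A) w hw y' hy'B', ?_, ?_⟩
          · rw [hcuwd, hmono2 u hu y' hy'B']
          · rw [hcuwd, hmono2 w hw y' hy'B']
        · intro hcuwd
          refine hM ⟨u, hAs hu, w, hAs hw, y, hBs hyB, huw,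
            hdiff A hA B hB (Ne.symm hBA) u hu y hyB,
            hdiff A hA B hB (Ne.symm hBA) w hw y hyB, ?_, ?_⟩
          · rw [hcuwd, hmono1 u hu y hyB]
          · rw [hcuwd, hmono1 w hw y hyB]
      set sees : Finset V → Prop := fun A =>
        ∃ B ∈ P, ∃ B' ∈ P, B ≠ A ∧ B' ≠ A ∧ ∃ x ∈ A, ∃ y ∈ B, ∃ x' ∈ A, ∃ y' ∈ B',
          c x y ≠ c x' y' with hseesdef
      -- number of parts is at most 5 (Ramsey)
      have hm5 : P.card ≤ 5 := by
        by_contra hbig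
        push_neg at hbig
        obtain ⟨A0, hA0⟩ : P.Nonempty := Finset.card_pos.1 (by omega)
        obtain ⟨a0, ha0⟩ := (hPparts A0 hA0).1
        have ha0s : a0 ∈ s := (hPparts A0 hA0).2 ha0
        have htcard : (P.erase A0).card = P.card - 1 := Finset.card_erase_of_mem hA0
        have key : ∀ (p : α) (t3 : Finset (Finset V)), t3 ⊆ P.erase A0 → 2 < t3.card →
            (∀ B ∈ t3, ∀ y ∈ B, c a0 y = p) → False := by
          intro p t3 hsub3 hcard3 hcolp
          obtain ⟨B1, hB1, B2, hB2, B3, hB3, h12, h13, h23⟩ := Finset.two_lt_card.1 hcard3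
          have hB1P := (Finset.mem_erase.1 (hsub3 hB1)).2
          have hB2P := (Finset.mem_erase.1 (hsub3 hB2)).2
          have hB3P := (Finset.mem_erase.1 (hsub3 hB3)).2
          have hB1A0 := (Finset.mem_erase.1 (hsub3 hB1)).1
          have hB2A0 := (Finset.mem_erase.1 (hsub3 hB2)).1
          have hB3A0 := (Finset.mem_erase.1 (hsub3 hB3)).1
          obtain ⟨y1, hy1⟩ := (hPparts B1 hB1P).1
          obtain ⟨y2, hy2⟩ := (hPparts B2 hB2P).1
          obtain ⟨y3, hy3⟩ := (hPparts B3 hB3P).1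
          have hy1s : y1 ∈ s := (hPparts B1 hB1P).2 hy1
          have hy2s : y2 ∈ s := (hPparts B2 hB2P).2 hy2
          have hy3s : y3 ∈ s := (hPparts B3 hB3P).2 hy3
          have hc1 : c a0 y1 = p := hcolp B1 hB1 y1 hy1
          have hc2 : c a0 y2 = p := hcolp B2 hB2 y2 hy2
          have hc3 : c a0 y3 = p := hcolp B3 hB3 y3 hy3
          have hpne : ∀ (Bi Bj : Finset V), Bi ∈ P → Bj ∈ P → Bi ≠ Bj →
              ∀ yi ∈ Bi, ∀ yj ∈ Bj, yi ∈ s → yj ∈ s → c a0 yi = p → c a0 yj = p →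
              Bi ≠ A0 → Bj ≠ A0 → c yi yj ≠ p := by
            intro Bi Bj hBi hBj hBij yi hyi yj hyj hyis hyjs hci hcj hBiA hBjA hyij
            refine hM ⟨a0, ha0s, yi, hyis, yj, hyjs,
              hdiff A0 hA0 Bi hBi (fun h => hBiA h.symm) a0 ha0 yi hyi,
              hdiff A0 hA0 Bj hBj (fun h => hBjA h.symm) a0 ha0 yj hyj,
              hdiff Bi hBi Bj hBj hBij yi hyi yj hyj, ?_, ?_⟩
            · rw [hci, hcj]
            · rw [hci, hyij]
          have hp12 := hpne B1 B2 hB1P hB2P h12 y1 hy1 y2 hy2 hy1s hy2s hc1 hc2 hB1A0 hB2A0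
          have hp13 := hpne B1 B3 hB1P hB3P h13 y1 hy1 y3 hy3 hy1s hy3s hc1 hc3 hB1A0 hB3A0
          have hp23 := hpne B2 B3 hB2P hB3P h23 y2 hy2 y3 hy3 hy2s hy3s hc2 hc3 hB2A0 hB3A0
          obtain ⟨d12, hd12, hmm12⟩ := hPmono B1 hB1P B2 hB2P h12
          obtain ⟨d13, hd13, hmm13⟩ := hPmono B1 hB1P B3 hB3P h13
          obtain ⟨d23, hd23, hmm23⟩ := hPmono B2 hB2P B3 hB3P h23
          have hprb : p = r ∨ p = b := by
            obtain ⟨d, hd, hmm⟩ := hPmono A0 hA0 B1 hB1P (fun h => hB1A0 h.symm)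
            rw [← hc1, hmm a0 ha0 y1 hy1]; exact hd
          have e12 : c y1 y2 = d12 := hmm12 y1 hy1 y2 hy2
          have e13 : c y1 y3 = d13 := hmm13 y1 hy1 y3 hy3
          have e23 : c y2 y3 = d23 := hmm23 y2 hy2 y3 hy3
          have q1 : c y1 y2 = c y1 y3 := by
            rw [e12, e13]
            exact hopq d12 d13 p hd12 hd13 hprb (fun h => hp12 (e12 ▸ h)) (fun h => hp13 (e13 ▸ h))
          have q2 : c y1 y2 = c y2 y3 := by
            rw [e12, e23]
            exact hopq d12 d23 p hd12 hd23 hprb (fun h => hp12 (e12 ▸ h)) (fun h => hp23 (e23 ▸ h))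
          exact hM ⟨y1, hy1s, y2, hy2s, y3, hy3s,
            hdiff B1 hB1P B2 hB2P h12 y1 hy1 y2 hy2,
            hdiff B1 hB1P B3 hB3P h13 y1 hy1 y3 hy3,
            hdiff B2 hB2P B3 hB3P h23 y2 hy2 y3 hy3, q1, q2⟩
        have hsplit := Finset.card_filter_add_card_filter_not
          (s := P.erase A0) (p := fun B => ∃ y ∈ B, c a0 y = r)
        by_cases hR3 : 2 < ((P.erase A0).filter (fun B => ∃ y ∈ B, c a0 y = r)).card
        · refine key r ((P.erase A0).filter (fun B => ∃ y ∈ B, c a0 y = r))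
            (Finset.filter_subset _ _) hR3 ?_
          intro B hBt y hy
          obtain ⟨hBe, y', hy', hcy'⟩ := Finset.mem_filter.1 hBt
          have hBP := (Finset.mem_erase.1 hBe).2
          have hBA0 := (Finset.mem_erase.1 hBe).1
          obtain ⟨d, hd, hmm⟩ := hPmono A0 hA0 B hBP (fun h => hBA0 h.symm)
          rw [hmm a0 ha0 y hy, ← hmm a0 ha0 y' hy', hcy']
        · refine key b ((P.erase A0).filter (fun B => ¬ ∃ y ∈ B, c a0 y = r))
            (Finset.filter_subset _ _) (by omega) ?_
          intro B hBt y hy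
          obtain ⟨hBe, hnex⟩ := Finset.mem_filter.1 hBt
          have hBP := (Finset.mem_erase.1 hBe).2
          have hBA0 := (Finset.mem_erase.1 hBe).1
          obtain ⟨d, hd, hmm⟩ := hPmono A0 hA0 B hBP (fun h => hBA0 h.symm)
          rcases hd with hdr | hdb
          · exfalso; exact hnex ⟨y, hy, by rw [hmm a0 ha0 y hy, hdr]⟩
          · rw [hmm a0 ha0 y hy, hdb]
      -- a part not seeing two colors has all its cross colors equal
      have hnotsees : ∀ A ∈ P, ¬ sees A → ∀ x0 ∈ A, ∀ B1 ∈ P, B1 ≠ A → ∀ y1 ∈ B1,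
          ∀ B2 ∈ P, B2 ≠ A → ∀ y2 ∈ B2, c x0 y1 = c x0 y2 := by
        intro A hA hns x0 hx0 B1 hB1 hB1A y1 hy1 B2 hB2 hB2A y2 hy2
        by_contra hne
        exact hns ⟨B1, hB1, B2, hB2, hB1A, hB2A, x0, hx0, y1, hy1, x0, hx0, y2, hy2, hne⟩
      -- constraints on the number of one-color parts
      have hX : 3 ≤ P.card → ∀ A ∈ P, ∀ A' ∈ P, A ≠ A' → ¬ sees A → ¬ sees A' → False := by
        intro hm3 A hA A' hA' hAA' hnsA hnsA'
        have hcC : 1 ≤ ((P.erase A).erase A').card := by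
          rw [Finset.card_erase_of_mem (Finset.mem_erase.2 ⟨Ne.symm hAA', hA'⟩),
            Finset.card_erase_of_mem hA]
          omega
        obtain ⟨C, hC⟩ := Finset.card_pos.1 hcC
        have hCA' : C ≠ A' := (Finset.mem_erase.1 hC).1
        have hCA : C ≠ A := (Finset.mem_erase.1 (Finset.mem_erase.1 hC).2).1
        have hCP : C ∈ P := (Finset.mem_erase.1 (Finset.mem_erase.1 hC).2).2
        obtain ⟨x0, hx0⟩ := (hPparts A hA).1
        obtain ⟨x0', hx0'⟩ := (hPparts A' hA').1
        obtain ⟨yC, hyC⟩ := (hPparts C hCP).1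
        have h1 : c x0 x0' = c x0 yC :=
          hnotsees A hA hnsA x0 hx0 A' hA' (Ne.symm hAA') x0' hx0' C hCP hCA yC hyC
        have h2 : c x0' x0 = c x0' yC :=
          hnotsees A' hA' hnsA' x0' hx0' A hA hAA' x0 hx0 C hCP hCA' yC hyC
        refine hM ⟨x0, (hPparts A hA).2 hx0, x0', (hPparts A' hA').2 hx0',
          yC, (hPparts C hCP).2 hyC,
          hdiff A hA A' hA' hAA' x0 hx0 x0' hx0',
          hdiff A hA C hCP (fun h => hCA h.symm) x0 hx0 yC hyC,
          hdiff A' hA' C hCP (fun h => hCA' h.symm) x0' hx0' yC hyC, h1, ?_⟩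
        rw [hsym x0 x0', h2]
      have hY : 4 ≤ P.card → ∀ A ∈ P, ¬ sees A → False := by
        intro hm4 A hA hnsA
        have hcC : 2 < (P.erase A).card := by
          rw [Finset.card_erase_of_mem hA]; omega
        obtain ⟨B1, hB1, B2, hB2, B3, hB3, h12, h13, h23⟩ := Finset.two_lt_card.1 hcC
        have hB1P := (Finset.mem_erase.1 hB1).2
        have hB2P := (Finset.mem_erase.1 hB2).2
        have hB3P := (Finset.mem_erase.1 hB3).2
        have hB1A := (Finset.mem_erase.1 hB1).1
        have hB2A := (Finset.mem_erase.1 hB2).1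
        have hB3A := (Finset.mem_erase.1 hB3).1
        obtain ⟨x0, hx0⟩ := (hPparts A hA).1
        obtain ⟨y1, hy1⟩ := (hPparts B1 hB1P).1
        obtain ⟨y2, hy2⟩ := (hPparts B2 hB2P).1
        obtain ⟨y3, hy3⟩ := (hPparts B3 hB3P).1
        have hall12 : c x0 y1 = c x0 y2 :=
          hnotsees A hA hnsA x0 hx0 B1 hB1P hB1A y1 hy1 B2 hB2P hB2A y2 hy2
        have hall13 : c x0 y1 = c x0 y3 :=
          hnotsees A hA hnsA x0 hx0 B1 hB1P hB1A y1 hy1 B3 hB3P hB3A y3 hy3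
        -- cross colors among B's differ from d := c x0 y1
        have hpne : ∀ (Bi Bj : Finset V), Bi ∈ P → Bj ∈ P → Bi ≠ Bj → Bi ≠ A → Bj ≠ A →
            ∀ yi ∈ Bi, ∀ yj ∈ Bj, c x0 yi = c x0 y1 → c x0 yj = c x0 y1 →
            c yi yj ≠ c x0 y1 := by
          intro Bi Bj hBi hBj hBij hBiA hBjA yi hyi yj hyj hci hcj hyij
          refine hM ⟨x0, (hPparts A hA).2 hx0, yi, (hPparts Bi hBi).2 hyi,
            yj, (hPparts Bj hBj).2 hyj,
            hdiff A hA Bi hBi (fun h => hBiA h.symm) x0 hx0 yi hyi,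
            hdiff A hA Bj hBj (fun h => hBjA h.symm) x0 hx0 yj hyj,
            hdiff Bi hBi Bj hBj hBij yi hyi yj hyj, ?_, ?_⟩
          · rw [hci, hcj]
          · rw [hci, hyij]
        have hp12 := hpne B1 B2 hB1P hB2P h12 hB1A hB2A y1 hy1 y2 hy2 rfl hall12.symm
        have hp13 := hpne B1 B3 hB1P hB3P h13 hB1A hB3A y1 hy1 y3 hy3 rfl hall13.symm
        have hp23 := hpne B2 B3 hB2P hB3P h23 hB2A hB3A y2 hy2 y3 hy3 hall12.symm hall13.symm
        obtain ⟨d12, hd12, hmm12⟩ := hPmono B1 hB1P B2 hB2P h12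
        obtain ⟨d13, hd13, hmm13⟩ := hPmono B1 hB1P B3 hB3P h13
        obtain ⟨d23, hd23, hmm23⟩ := hPmono B2 hB2P B3 hB3P h23
        have hprb : c x0 y1 = r ∨ c x0 y1 = b := by
          obtain ⟨d, hd, hmm⟩ := hPmono A hA B1 hB1P (fun h => hB1A h.symm)
          rw [hmm x0 hx0 y1 hy1]; exact hd
        have e12 : c y1 y2 = d12 := hmm12 y1 hy1 y2 hy2
        have e13 : c y1 y3 = d13 := hmm13 y1 hy1 y3 hy3
        have e23 : c y2 y3 = d23 := hmm23 y2 hy2 y3 hy3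
        have q1 : c y1 y2 = c y1 y3 := by
          rw [e12, e13]
          exact hopq d12 d13 (c x0 y1) hd12 hd13 hprb
            (fun h => hp12 (e12 ▸ h)) (fun h => hp13 (e13 ▸ h))
        have q2 : c y1 y2 = c y2 y3 := by
          rw [e12, e23]
          exact hopq d12 d23 (c x0 y1) hd12 hd23 hprb
            (fun h => hp12 (e12 ▸ h)) (fun h => hp23 (e23 ▸ h))
        exact hM ⟨y1, (hPparts B1 hB1P).2 hy1, y2, (hPparts B2 hB2P).2 hy2,
          y3, (hPparts B3 hB3P).2 hy3,
          hdiff B1 hB1P B2 hB2P h12 y1 hy1 y2 hy2,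
          hdiff B1 hB1P B3 hB3P h13 y1 hy1 y3 hy3,
          hdiff B2 hB2P B3 hB3P h23 y2 hy2 y3 hy3, q1, q2⟩
      -- sum up
      have hparteq : s = P.biUnion id := by
        ext w
        simp only [Finset.mem_biUnion, id]
        constructor
        · exact fun hw => hPcover w hw
        · rintro ⟨A, hA, hwA⟩; exact (hPparts A hA).2 hwA
      have hsum : s.card = ∑ A ∈ P, A.card := by
        rw [hparteq]
        exact Finset.card_biUnion (fun A hA B hB hAB => Finset.disjoint_left.2
          (fun {w} hwA hwB => hAB (hPdisj A hA B hB w hwA hwB)))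
      have hsplitsum : ∑ A ∈ P.filter sees, A.card
          + ∑ A ∈ P.filter (fun A => ¬ sees A), A.card = ∑ A ∈ P, A.card :=
        Finset.sum_filter_add_sum_filter_not P sees _
      have hsplitcard : (P.filter sees).card + (P.filter (fun A => ¬ sees A)).card = P.card :=
        Finset.card_filter_add_card_filter_not sees
      have hb2 : ∑ A ∈ P.filter sees, A.card ≤ (P.filter sees).card * g j := by
        calc ∑ A ∈ P.filter sees, A.card ≤ ∑ _A ∈ P.filter sees, g j := by
              refine Finset.sum_le_sum ?_
              intro A hA
              obtain ⟨hAP, hAsees⟩ := Finset.mem_filter.1 hA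
              exact hpartcard2 A hAP hAsees
          _ = (P.filter sees).card * g j := by rw [Finset.sum_const, smul_eq_mul]
      have hb1 : ∑ A ∈ P.filter (fun A => ¬ sees A), A.card
          ≤ (P.filter (fun A => ¬ sees A)).card * g (j+1) := by
        calc ∑ A ∈ P.filter (fun A => ¬ sees A), A.card
            ≤ ∑ _A ∈ P.filter (fun A => ¬ sees A), g (j+1) := by
              refine Finset.sum_le_sum ?_
              intro A hA
              exact hpartcard1 A (Finset.mem_filter.1 hA).1
          _ = _ := by rw [Finset.sum_const, smul_eq_mul]
      have hc1' : P.card ≤ 2 ∨ (P.filter (fun A => ¬ sees A)).card ≤ 1 := by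
        by_cases h3 : 3 ≤ P.card
        · right
          by_contra hb
          push_neg at hb
          obtain ⟨A, hA, A', hA', hAA'⟩ := Finset.one_lt_card.1 hb
          exact hX h3 A (Finset.mem_filter.1 hA).1 A' (Finset.mem_filter.1 hA').1 hAA'
            (Finset.mem_filter.1 hA).2 (Finset.mem_filter.1 hA').2
        · left; omega
      have hc2' : P.card ≤ 3 ∨ (P.filter (fun A => ¬ sees A)).card = 0 := by
        by_cases h4 : 4 ≤ P.card
        · right
          by_contra hb
          obtain ⟨A, hA⟩ := Finset.card_pos.1
            (show 0 < (P.filter (fun A => ¬ sees A)).card by omega)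
          exact hY h4 A (Finset.mem_filter.1 hA).1 (Finset.mem_filter.1 hA).2
        · left; omega
      rw [g_two]
      have harith := arith (g j) (g (j+1)) (P.filter (fun A => ¬ sees A)).card
        (P.filter sees).card (g_pos j) (g_mono j) (gR2 j) (gR3 j)
        (by omega) (by omega) (by omega) (by omega)
      omega

end Main2

lemma monoCopy_of_three {n k : ℕ} (c : Sym2 (Fin n) → Fin k) {x y z : Fin n}
    (hxy : x ≠ y) (hxz : x ≠ z) (hyz : y ≠ z)
    (h1 : c s(x, y) = c s(x, z)) (h2 : c s(x, y) = c s(y, z)) :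
    HasMonoCopy c (⊤ : SimpleGraph (Fin 3)) := by
  refine ⟨c s(x, y), ⟨![x, y, z], ?_⟩, ?_⟩
  · intro a b hab
    fin_cases a <;> fin_cases b <;> simp_all
  · intro u v huv
    show c s(![x, y, z] u, ![x, y, z] v) = c s(x, y)
    fin_cases u <;> fin_cases v <;>
      simp [Sym2.eq_swap (a := y) (b := x), Sym2.eq_swap (a := z) (b := x), Sym2.eq_swap (a := z) (b := y), ← h1, ← h2] at huv ⊢

lemma upper (k n : ℕ) (h : g k + 1 ≤ n) : grProp k (⊤ : SimpleGraph (Fin 3)) n := by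
  intro c
  by_contra hcon
  push_neg at hcon
  obtain ⟨hR, hM⟩ := hcon
  have hsym : Sym (fun x y : Fin n => c s(x, y)) := fun x y => by
    simp only [Sym2.eq_swap]
  have hGal : GallaiOn (fun x y : Fin n => c s(x, y)) Finset.univ := by
    intro x _ y _ z _ hxy hxz hyz
    by_contra hno
    push_neg at hno
    exact hR ⟨x, y, z, hxy, hxz, hyz, hno.1, hno.2.1, hno.2.2⟩
  have hNoMono : ¬ MonoTri (fun x y : Fin n => c s(x, y)) Finset.univ := by
    rintro ⟨x, -, y, -, z, -, hxy, hxz, hyz, h1, h2⟩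
    exact hM (monoCopy_of_three c hxy hxz hyz h1 h2)
  have hcnt := counting k Finset.univ (fun x y => c s(x, y)) Finset.univ hsym hGal hNoMono
    (fun x _ y _ _ => Finset.mem_univ _) (by simp)
  rw [Finset.card_univ, Fintype.card_fin] at hcnt
  omega

lemma lower_aux {W : Type} [Fintype W] [DecidableEq W] (k m : ℕ) (hk : 0 < k)
    (col : W → W → ℕ) (hcard : Fintype.card W = m)
    (hsym : ∀ u v, col u v = col v u) (hlt : ∀ u v, col u v < k)
    (hgal : ∀ x y z : W, x ≠ y → x ≠ z → y ≠ z →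
      (col x y = col x z ∨ col x y = col y z ∨ col x z = col y z))
    (hmono : ∀ x y z : W, x ≠ y → x ≠ z → y ≠ z →
      ¬(col x y = col x z ∧ col x y = col y z)) :
    ¬ grProp k (⊤ : SimpleGraph (Fin 3)) m := by
  intro hgr
  have e : Fin m ≃ W := (Fintype.equivFinOfCardEq hcard).symm
  have hfsym : ∀ a b' : Fin m, (⟨col (e a) (e b'), hlt _ _⟩ : Fin k)
      = ⟨col (e b') (e a), hlt _ _⟩ := fun a b' => Fin.ext (hsym _ _)
  set cc : Sym2 (Fin m) → Fin k :=
    Sym2.lift ⟨fun a b' => ⟨col (e a) (e b'), hlt _ _⟩, hfsym⟩ with hccdef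
  have hcc : ∀ a b' : Fin m, cc s(a, b') = ⟨col (e a) (e b'), hlt _ _⟩ :=
    fun a b' => by rw [hccdef]; exact Sym2.lift_mk _ _ _
  rcases hgr cc with hR | hMo
  · obtain ⟨x, y, z, hxy, hxz, hyz, n1, n2, n3⟩ := hR
    rw [hcc x y, hcc x z] at n1
    rw [hcc x y, hcc y z] at n2
    rw [hcc x z, hcc y z] at n3
    have hxy' : e x ≠ e y := fun h => hxy (e.injective h)
    have hxz' : e x ≠ e z := fun h => hxz (e.injective h)
    have hyz' : e y ≠ e z := fun h => hyz (e.injective h)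
    rcases hgal (e x) (e y) (e z) hxy' hxz' hyz' with h | h | h
    · exact n1 (Fin.ext h)
    · exact n2 (Fin.ext h)
    · exact n3 (Fin.ext h)
  · obtain ⟨i, F, hF⟩ := hMo
    have h01 : F 0 ≠ F 1 := fun h => (by decide : (0 : Fin 3) ≠ 1) (F.injective h)
    have h02 : F 0 ≠ F 2 := fun h => (by decide : (0 : Fin 3) ≠ 2) (F.injective h)
    have h12 : F 1 ≠ F 2 := fun h => (by decide : (1 : Fin 3) ≠ 2) (F.injective h)
    have a01 := hF 0 1 (by simp)
    have a02 := hF 0 2 (by simp)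
    have a12 := hF 1 2 (by simp)
    rw [hcc] at a01 a02 a12
    have v01 : col (e (F 0)) (e (F 1)) = i.val := congrArg Fin.val a01
    have v02 : col (e (F 0)) (e (F 2)) = i.val := congrArg Fin.val a02
    have v12 : col (e (F 1)) (e (F 2)) = i.val := congrArg Fin.val a12
    exact hmono (e (F 0)) (e (F 1)) (e (F 2))
      (fun h => h01 (e.injective h)) (fun h => h02 (e.injective h))
      (fun h => h12 (e.injective h)) ⟨by rw [v01, v02], by rw [v01, v12]⟩

lemma colE_diag {t : ℕ} (x : Fin t → Fin 5) : colE x x = 0 := by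
  rw [colE, dif_pos rfl]

lemma lower (k : ℕ) (hk : 2 ≤ k) : ¬ grProp k (⊤ : SimpleGraph (Fin 3)) (g k) := by
  rcases Nat.even_or_odd k with he | ho
  · have hkk : k = 2 * (k / 2) := by
      have := Nat.even_iff.1 he; omega
    refine lower_aux k (g k) (by omega) (colE (t := k / 2)) ?_ colE_symm ?_
      colE_gallai colE_nomono
    · rw [Fintype.card_fun, Fintype.card_fin, Fintype.card_fin]
      rw [show g k = g (2 * (k / 2)) from by rw [← hkk], g_even]
    · intro u v
      by_cases h : u = v
      · rw [h, colE_diag]; omega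
      · have := colE_lt u v h; omega
  · have hkk : k = 2 * ((k - 1) / 2) + 1 := by
      have := Nat.odd_iff.1 ho; omega
    refine lower_aux k (g k) (by omega) (colO (t := (k - 1) / 2)) ?_ colO_symm ?_
      colO_gallai colO_nomono
    · rw [Fintype.card_prod, Fintype.card_fun, Fintype.card_fin, Fintype.card_fin,
        Fintype.card_fin]
      rw [show g k = g (2 * ((k - 1) / 2) + 1) from by rw [← hkk], g_odd]
    · intro u v
      by_cases h : u = v
      · rw [h, colO, if_pos rfl, colE_diag]; omega
      · have := colO_lt u v h; omega

lemma gr_eq (k : ℕ) (hk : 2 ≤ k) : gr k (⊤ : SimpleGraph (Fin 3)) = g k + 1 := by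
  unfold gr
  apply le_antisymm
  · exact Nat.sInf_le (fun n hn => upper k n hn)
  · refine le_csInf ⟨g k + 1, fun n hn => upper k n hn⟩ ?_
    intro N hN
    by_contra hlt
    push_neg at hlt
    exact lower k hk (hN (g k) (by omega))

end GRaux

theorem gallai_ramsey_triangle (k : ℕ) (hk : 2 ≤ k) :
    (Even k → gr k (⊤ : SimpleGraph (Fin 3)) = 5 ^ (k / 2) + 1) ∧
    (Odd k → gr k (⊤ : SimpleGraph (Fin 3)) = 2 * 5 ^ ((k - 1) / 2) + 1) := by
  constructor
  · intro he
    rw [GRaux.gr_eq k hk]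
    have hkk : k = 2 * (k / 2) := by
      have := Nat.even_iff.1 he; omega
    rw [show GRaux.g k = GRaux.g (2 * (k / 2)) from by rw [← hkk], GRaux.g_even]
  · intro ho
    rw [GRaux.gr_eq k hk]
    have hkk : k = 2 * ((k - 1) / 2) + 1 := by
      have := Nat.odd_iff.1 ho; omega
    rw [show GRaux.g k = GRaux.g (2 * ((k - 1) / 2) + 1) from by rw [← hkk], GRaux.g_odd]
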